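/- Let A: [t₀,t_f] → ℝ^{n×n} be of class C² with ‖A(t)‖ ≤ M_A > 0, ‖Ȧ(t)‖ ≤ M_{Ȧ}, and ‖Ä(t)‖ ≤ M_{Ä} for all t, and let φ be the transition matrix of ẋ = A(t)x. Define φ̃(t,s) = I + (t−s)A(s) + ((t−s)²/2)(Ȧ(s) + A(s)²). Then for all t₀ ≤ s ≤ t ≤ t_f, ‖φ(t,s) − φ̃(t,s)‖ ≤ (1 + 3M_{Ȧ}/M_A² + M_{Ä}/M_A³)(e^{(t−s)M_A} − (t−s)²M_A²/2 − (t−s)M_A − 1). -/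

import Mathlib

open Set Real

private lemma aux_Ici_of_Icc {F : Type*} [NormedAddCommGroup F] [NormedSpace ℝ F]
    {f : ℝ → F} {f' : F} {t₀ tf x : ℝ} (h1 : t₀ ≤ x) (h2 : x < tf)
    (h : HasDerivWithinAt f f' (Set.Icc t₀ tf) x) : HasDerivWithinAt f f' (Set.Ici x) x := by
  apply h.mono_of_mem_nhdsWithin
  exact mem_nhdsWithin.mpr
    ⟨Iio tf, isOpen_Iio, h2, fun y ⟨hy1, hy2⟩ => ⟨h1.trans hy2, le_of_lt hy1⟩⟩

theorem transition_matrix_taylor2_bound {E : Type*} [NormedAddCommGroup E]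
    [NormedSpace ℝ E]
    (t₀ tf MA MdA MddA : ℝ) (A A' A'' : ℝ → E →L[ℝ] E) (φ : ℝ → ℝ → E →L[ℝ] E)
    (hA' : ∀ t ∈ Set.Icc t₀ tf, HasDerivWithinAt A (A' t) (Set.Icc t₀ tf) t)
    (hA'' : ∀ t ∈ Set.Icc t₀ tf, HasDerivWithinAt A' (A'' t) (Set.Icc t₀ tf) t)
    (hA''c : ContinuousOn A'' (Set.Icc t₀ tf))
    (hMA : 0 < MA)
    (hA_bound : ∀ t ∈ Set.Icc t₀ tf, ‖A t‖ ≤ MA)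
    (hA'_bound : ∀ t ∈ Set.Icc t₀ tf, ‖A' t‖ ≤ MdA)
    (hA''_bound : ∀ t ∈ Set.Icc t₀ tf, ‖A'' t‖ ≤ MddA)
    (hode : ∀ s ∈ Set.Icc t₀ tf, ∀ t ∈ Set.Icc t₀ tf,
      HasDerivWithinAt (fun τ => φ τ s) ((A t).comp (φ t s)) (Set.Icc t₀ tf) t)
    (hinit : ∀ s ∈ Set.Icc t₀ tf, φ s s = ContinuousLinearMap.id ℝ E) :
    ∀ s t : ℝ, t₀ ≤ s → s ≤ t → t ≤ tf →
      ‖φ t s - (ContinuousLinearMap.id ℝ E + (t - s) • A s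
          + ((t - s) ^ 2 / 2) • (A' s + (A s).comp (A s)))‖
        ≤ (1 + 3 * MdA / MA ^ 2 + MddA / MA ^ 3) *
            (Real.exp ((t - s) * MA) - (t - s) ^ 2 * MA ^ 2 / 2 - (t - s) * MA - 1) := by
  intro s t hs hst htf
  have hMA' : MA ≠ 0 := ne_of_gt hMA
  have hsI : s ∈ Icc t₀ tf := ⟨hs, hst.trans htf⟩
  have htI : t ∈ Icc t₀ tf := ⟨hs.trans hst, htf⟩
  have hstf : s ≤ tf := hst.trans htf
  have hMdA : 0 ≤ MdA := (norm_nonneg _).trans (hA'_bound s hsI)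
  have hMddA : 0 ≤ MddA := (norm_nonneg _).trans (hA''_bound s hsI)
  set K := MddA + 3 * MdA * MA + MA ^ 3 with hKdef
  set F : ℝ → E →L[ℝ] E := fun τ => φ τ s with hFdef
  set C : E →L[ℝ] E := A' s + (A s).comp (A s) with hCdef
  have hFs : F s = ContinuousLinearMap.id ℝ E := hinit s hsI
  have hFd : ∀ x ∈ Icc t₀ tf, HasDerivWithinAt F ((A x).comp (F x)) (Icc t₀ tf) x :=
    fun x hx => hode s hsI x hx
  have hFc : ContinuousOn F (Icc t₀ tf) := fun x hx => (hFd x hx).continuousWithinAt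
  have hmono : Icc s tf ⊆ Icc t₀ tf := Icc_subset_Icc hs le_rfl
  have mem' : ∀ x ∈ Ico s tf, x ∈ Icc t₀ tf := fun x hx => ⟨hs.trans hx.1, hx.2.le⟩
  -- Step 1 : Gronwall bound on ‖F x‖
  have hFb : ∀ x ∈ Icc s tf, ‖F x‖ ≤ exp (MA * (x - s)) := by
    intro x hx
    have h := norm_le_gronwallBound_of_norm_deriv_right_le (f := F)
      (f' := fun y => (A y).comp (F y)) (δ := 1) (K := MA) (ε := 0) (a := s) (b := tf)
      (hFc.mono hmono)
      (fun y hy => aux_Ici_of_Icc (hs.trans hy.1) hy.2 (hFd y (mem' y hy)))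
      (by rw [hFs]; exact ContinuousLinearMap.norm_id_le)
      (fun y hy => by
        rw [add_zero]
        exact (ContinuousLinearMap.opNorm_comp_le _ _).trans
          (mul_le_mul_of_nonneg_right (hA_bound y (mem' y hy)) (norm_nonneg _)))
      x hx
    rwa [gronwallBound_ε0, one_mul] at h
  set Q : ℝ → E →L[ℝ] E :=
    fun τ => (A' τ).comp (F τ) + (A τ).comp ((A τ).comp (F τ)) with hQdef
  set R3 : ℝ → E →L[ℝ] E := fun τ =>
    ((A'' τ).comp (F τ) + (A' τ).comp ((A τ).comp (F τ)))
      + ((A' τ).comp ((A τ).comp (F τ)) + (A τ).comp (Q τ)) with hR3def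
  have hAF' : ∀ x ∈ Icc t₀ tf,
      HasDerivWithinAt (fun τ => (A τ).comp (F τ)) (Q x) (Icc t₀ tf) x :=
    fun x hx => (hA' x hx).clm_comp (hFd x hx)
  have hQ' : ∀ x ∈ Icc t₀ tf, HasDerivWithinAt Q (R3 x) (Icc t₀ tf) x :=
    fun x hx => ((hA'' x hx).clm_comp (hFd x hx)).add ((hA' x hx).clm_comp (hAF' x hx))
  -- norm estimate on R3
  have key : ∀ (B1 B2 : E →L[ℝ] E) (m1 m2 : ℝ), ‖B1‖ ≤ m1 → ‖B2‖ ≤ m2 →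
      ‖B1.comp B2‖ ≤ m1 * m2 := fun B1 B2 m1 m2 h1 h2 =>
    (ContinuousLinearMap.opNorm_comp_le _ _).trans
      (mul_le_mul h1 h2 (norm_nonneg _) ((norm_nonneg _).trans h1))
  have hR3b : ∀ x ∈ Ico s tf, ‖R3 x‖ ≤ K * exp (MA * (x - s)) := by
    intro x hx
    have hxI := mem' x hx
    set e := exp (MA * (x - s)) with hedef
    have hFx : ‖F x‖ ≤ e := hFb x ⟨hx.1, hx.2.le⟩
    have tAF : ‖(A x).comp (F x)‖ ≤ MA * e := key _ _ _ _ (hA_bound x hxI) hFx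
    have t1 : ‖(A'' x).comp (F x)‖ ≤ MddA * e := key _ _ _ _ (hA''_bound x hxI) hFx
    have t2 : ‖(A' x).comp ((A x).comp (F x))‖ ≤ MdA * (MA * e) :=
      key _ _ _ _ (hA'_bound x hxI) tAF
    have tQ : ‖Q x‖ ≤ MdA * e + MA * (MA * e) := by
      rw [hQdef]
      exact (norm_add_le _ _).trans
        (add_le_add (key _ _ _ _ (hA'_bound x hxI) hFx) (key _ _ _ _ (hA_bound x hxI) tAF))
    have t3 : ‖(A x).comp (Q x)‖ ≤ MA * (MdA * e + MA * (MA * e)) :=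
      key _ _ _ _ (hA_bound x hxI) tQ
    calc ‖R3 x‖ ≤ (MddA * e + MdA * (MA * e)) + (MdA * (MA * e) + MA * (MdA * e + MA * (MA * e))) := by
          rw [hR3def]
          exact (norm_add_le _ _).trans
            (add_le_add ((norm_add_le _ _).trans (add_le_add t1 t2))
              ((norm_add_le _ _).trans (add_le_add t2 t3)))
      _ = K * e := by rw [hKdef]; ring
  -- derivative facts for the scalar boundary functions
  have hid : ∀ x : ℝ, HasDerivAt (fun y : ℝ => y - s) 1 x :=
    fun x => (hasDerivAt_id x).sub_const s
  have hexp : ∀ x : ℝ, HasDerivAt (fun y : ℝ => exp (MA * (y - s))) (MA * exp (MA * (x - s))) x := by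
    intro x
    have h1 : HasDerivAt (fun y : ℝ => MA * (y - s)) MA x := by
      simpa using (hid x).const_mul MA
    simpa [mul_comm] using h1.exp
  have hB2d : ∀ x : ℝ, HasDerivAt (fun y : ℝ => (K / MA) * (exp (MA * (y - s)) - 1))
      (K * exp (MA * (x - s))) x := by
    intro x
    have h := ((hexp x).sub_const 1).const_mul (K / MA)
    refine h.congr_deriv ?_
    field_simp
  have hB1d : ∀ x : ℝ, HasDerivAt
      (fun y : ℝ => (K / MA ^ 2) * (exp (MA * (y - s)) - MA * (y - s) - 1))
      ((K / MA) * (exp (MA * (x - s)) - 1)) x := by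
    intro x
    have h := (((hexp x).sub ((hid x).const_mul MA)).sub_const 1).const_mul (K / MA ^ 2)
    refine h.congr_deriv ?_
    field_simp
  have hB0d : ∀ x : ℝ, HasDerivAt
      (fun y : ℝ => (K / MA ^ 3) *
        (exp (MA * (y - s)) - MA ^ 2 * (y - s) ^ 2 / 2 - MA * (y - s) - 1))
      ((K / MA ^ 2) * (exp (MA * (x - s)) - MA * (x - s) - 1)) x := by
    intro x
    have h := ((((hexp x).sub ((((hid x).pow 2).const_mul (MA ^ 2)).div_const 2)).sub
      ((hid x).const_mul MA)).sub_const 1).const_mul (K / MA ^ 3)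
    refine h.congr_deriv ?_
    field_simp
    ring
  -- Step 2 : bound on ‖Q x - C‖
  have hQs : Q s = C := by
    rw [hQdef, hCdef]
    simp [hFs]
  have hQc : ContinuousOn Q (Icc t₀ tf) := fun x hx => (hQ' x hx).continuousWithinAt
  have hR2b : ∀ x ∈ Icc s tf, ‖Q x - C‖ ≤ (K / MA) * (exp (MA * (x - s)) - 1) := by
    intro x hx
    refine image_norm_le_of_norm_deriv_right_le_deriv_boundary (a := s) (b := tf)
      (f := fun τ => Q τ - C) (f' := R3)
      (B := fun y => (K / MA) * (exp (MA * (y - s)) - 1))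
      (B' := fun y => K * exp (MA * (y - s)))
      ((hQc.mono hmono).sub continuousOn_const)
      (fun y hy => aux_Ici_of_Icc (hs.trans hy.1) hy.2 ((hQ' y (mem' y hy)).sub_const C))
      (by beta_reduce; rw [hQs]; simp)
      hB2d hR3b hx
  -- Step 3 : bound on the first remainder
  have hlin : ∀ x : ℝ, HasDerivWithinAt (fun τ : ℝ => A s + (τ - s) • C) C (Icc t₀ tf) x := by
    intro x
    have h := (hasDerivWithinAt_const x (Icc t₀ tf) (A s)).add
      (((hasDerivWithinAt_id x (Icc t₀ tf)).sub_const s).smul_const C)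
    exact h.congr_deriv (by simp)
  have hR1' : ∀ x ∈ Icc t₀ tf, HasDerivWithinAt
      (fun τ => (A τ).comp (F τ) - (A s + (τ - s) • C)) (Q x - C) (Icc t₀ tf) x :=
    fun x hx => (hAF' x hx).sub (hlin x)
  have hAFc : ContinuousOn (fun τ => (A τ).comp (F τ)) (Icc t₀ tf) :=
    fun x hx => (hAF' x hx).continuousWithinAt
  have hlinc : ContinuousOn (fun τ : ℝ => A s + (τ - s) • C) (Icc t₀ tf) :=
    fun x hx => (hlin x).continuousWithinAt
  have hR1s : (A s).comp (F s) - (A s + (s - s) • C) = 0 := by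
    rw [hFs]
    simp
  have hR1b : ∀ x ∈ Icc s tf, ‖(A x).comp (F x) - (A s + (x - s) • C)‖
      ≤ (K / MA ^ 2) * (exp (MA * (x - s)) - MA * (x - s) - 1) := by
    intro x hx
    refine image_norm_le_of_norm_deriv_right_le_deriv_boundary (a := s) (b := tf)
      (f := fun τ => (A τ).comp (F τ) - (A s + (τ - s) • C)) (f' := fun τ => Q τ - C)
      (B := fun y => (K / MA ^ 2) * (exp (MA * (y - s)) - MA * (y - s) - 1))
      (B' := fun y => (K / MA) * (exp (MA * (y - s)) - 1))
      ((hAFc.mono hmono).sub (hlinc.mono hmono))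
      (fun y hy => aux_Ici_of_Icc (hs.trans hy.1) hy.2 (hR1' y (mem' y hy)))
      (by beta_reduce; rw [hR1s]; simp)
      hB1d (fun y hy => hR2b y ⟨hy.1, hy.2.le⟩) hx
  -- Step 4 : bound on the full remainder
  set P : ℝ → E →L[ℝ] E := fun τ => ContinuousLinearMap.id ℝ E + (τ - s) • A s
      + ((τ - s) ^ 2 / 2) • C with hPdef
  have hP' : ∀ x : ℝ, HasDerivWithinAt P (A s + (x - s) • C) (Icc t₀ tf) x := by
    intro x
    have h0 : HasDerivWithinAt (fun τ : ℝ => (τ - s) ^ 2 / 2) (x - s) (Icc t₀ tf) x := by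
      have h := (((hasDerivWithinAt_id x (Icc t₀ tf)).sub_const s).pow 2).div_const 2
      refine h.congr_deriv ?_
      simp
    have h := ((hasDerivWithinAt_const x (Icc t₀ tf) (ContinuousLinearMap.id ℝ E)).add
      (((hasDerivWithinAt_id x (Icc t₀ tf)).sub_const s).smul_const (A s))).add
      (h0.smul_const C)
    rw [hPdef]
    refine h.congr_deriv ?_
    simp
  have hRd : ∀ x ∈ Icc t₀ tf, HasDerivWithinAt (fun τ => F τ - P τ)
      ((A x).comp (F x) - (A s + (x - s) • C)) (Icc t₀ tf) x :=
    fun x hx => (hFd x hx).sub (hP' x)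
  have hPc : ContinuousOn P (Icc t₀ tf) := fun x hx => (hP' x).continuousWithinAt
  have hRs : F s - P s = 0 := by
    rw [hFs, hPdef]
    simp
  have hRb : ‖F t - P t‖
      ≤ (K / MA ^ 3) * (exp (MA * (t - s)) - MA ^ 2 * (t - s) ^ 2 / 2 - MA * (t - s) - 1) := by
    refine image_norm_le_of_norm_deriv_right_le_deriv_boundary (a := s) (b := tf)
      (f := fun τ => F τ - P τ) (f' := fun τ => (A τ).comp (F τ) - (A s + (τ - s) • C))
      (B := fun y => (K / MA ^ 3) *
        (exp (MA * (y - s)) - MA ^ 2 * (y - s) ^ 2 / 2 - MA * (y - s) - 1))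
      (B' := fun y => (K / MA ^ 2) * (exp (MA * (y - s)) - MA * (y - s) - 1))
      ((hFc.mono hmono).sub (hPc.mono hmono))
      (fun y hy => aux_Ici_of_Icc (hs.trans hy.1) hy.2 (hRd y (mem' y hy)))
      (by beta_reduce; rw [hRs]; simp)
      hB0d (fun y hy => hR1b y ⟨hy.1, hy.2.le⟩) ⟨hst, htf⟩
  have heq : (1 + 3 * MdA / MA ^ 2 + MddA / MA ^ 3) *
      (Real.exp ((t - s) * MA) - (t - s) ^ 2 * MA ^ 2 / 2 - (t - s) * MA - 1)
      = (K / MA ^ 3) *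
        (exp (MA * (t - s)) - MA ^ 2 * (t - s) ^ 2 / 2 - MA * (t - s) - 1) := by
    rw [mul_comm (t - s) MA, hKdef]
    field_simp
    ring
  rw [heq]
  exact hRb
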